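/- Let m ≡ 1 (mod 12) with m ≥ 13, v = 2^((m-1)/2) - 1, and let ā be an odd integer with 1 ≤ ā ≤ 2^((m-1)/2) - 1. Then the binary digit sum of ā·v equals (m-1)/2. -/

import Mathlib

lemma sd_step (n : ℕ) : (Nat.digits 2 n).sum = n % 2 + (Nat.digits 2 (n / 2)).sum := by
  rcases Nat.eq_zero_or_pos n with h | h
  · simp [h]
  · rw [Nat.digits_def' (by norm_num : 1 < 2) h]; simp

lemma sd_split (k : ℕ) : ∀ b c : ℕ, c < 2 ^ k →
    (Nat.digits 2 (b * 2 ^ k + c)).sum = (Nat.digits 2 b).sum + (Nat.digits 2 c).sum := by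
  induction k with
  | zero => intro b c hc; interval_cases c; simp
  | succ k ih =>
    intro b c hc
    have he : b * 2 ^ (k + 1) = 2 * (b * 2 ^ k) := by ring
    have h1 : (b * 2 ^ (k + 1) + c) % 2 = c % 2 := by
      rw [he]; omega
    have h2 : (b * 2 ^ (k + 1) + c) / 2 = b * 2 ^ k + c / 2 := by
      rw [he]; omega
    have h3 : c / 2 < 2 ^ k := by
      rw [pow_succ] at hc; omega
    rw [sd_step (b * 2 ^ (k + 1) + c), h1, h2, ih b (c / 2) h3, sd_step c]
    ring

lemma sd_compl (k : ℕ) : ∀ b : ℕ, b < 2 ^ k →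
    (Nat.digits 2 (2 ^ k - 1 - b)).sum + (Nat.digits 2 b).sum = k := by
  induction k with
  | zero => intro b hb; interval_cases b; simp
  | succ k ih =>
    intro b hb
    have hP : 0 < 2 ^ k := Nat.pow_pos (by norm_num)
    have hq : b / 2 < 2 ^ k := by rw [pow_succ] at hb; omega
    have h1 : 2 ^ (k + 1) - 1 - b = 2 * (2 ^ k - 1 - b / 2) + (1 - b % 2) := by
      rw [pow_succ]; omega
    have h2 : (2 * (2 ^ k - 1 - b / 2) + (1 - b % 2)) % 2 = 1 - b % 2 := by omega
    have h3 : (2 * (2 ^ k - 1 - b / 2) + (1 - b % 2)) / 2 = 2 ^ k - 1 - b / 2 := by omega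
    rw [h1, sd_step, h2, h3, sd_step b]
    have := ih (b / 2) hq
    omega

theorem digitSum_oddMul_v (m : ℕ) (hm : 13 ≤ m) (h : m % 12 = 1)
    (a : ℕ) (hodd : Odd a) (ha1 : 1 ≤ a) (ha2 : a ≤ 2 ^ ((m - 1) / 2) - 1) :
    (Nat.digits 2 (a * (2 ^ ((m - 1) / 2) - 1))).sum = (m - 1) / 2 := by
  set k := (m - 1) / 2 with hk
  have hP : 1 ≤ 2 ^ k := Nat.one_le_two_pow
  have haP : a ≤ 2 ^ k := le_trans ha2 (Nat.sub_le _ _)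
  have key : a * (2 ^ k - 1) = (a - 1) * 2 ^ k + (2 ^ k - a) := by
    zify [ha1, haP, hP]; ring
  have hlt : 2 ^ k - a < 2 ^ k := by omega
  rw [key, sd_split k (a - 1) (2 ^ k - a) hlt]
  have heq : 2 ^ k - a = 2 ^ k - 1 - (a - 1) := by omega
  rw [heq]
  have := sd_compl k (a - 1) (by omega)
  omega
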